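/- arXiv:1605.01693 — 5 statements merged into one kernel-verified Lean document; each statement's English description precedes it below -/
import Mathlib

section
/- Let f : X → Y be a map of metric spaces which is an s-local isometry (for some s > 0, the restriction of f to every open ball B(x, s) is an isometry onto B(f(x), s)), where Y is a connected metric space and X is nonempty. Then f is a covering map. -/
/-- An `s`-local isometry from a nonempty metric space to a connected metric
space is a covering map. -/
theorem sLocalIsometry_isCoveringMap {X Y : Type*} [MetricSpace X] [MetricSpace Y]
    [Nonempty X] [ConnectedSpace Y] (f : X → Y) (s : ℝ) (hs : 0 < s)
    (hloc : ∀ x : X,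
      (∀ a ∈ Metric.ball x s, ∀ b ∈ Metric.ball x s, dist (f a) (f b) = dist a b) ∧
      f '' Metric.ball x s = Metric.ball (f x) s) :
    IsCoveringMap f := by
  classical
  -- distance preservation on balls
  have hdist : ∀ x a b : X, dist a x < s → dist b x < s → dist (f a) (f b) = dist a b := by
    intro x a b ha hb
    exact (hloc x).1 a (Metric.mem_ball.mpr ha) b (Metric.mem_ball.mpr hb)
  -- injectivity on balls
  have hinj : ∀ x a b : X, dist a x < s → dist b x < s → f a = f b → a = b := by
    intro x a b ha hb hf
    have h := hdist x a b ha hb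
    rw [hf, dist_self] at h
    exact dist_eq_zero.mp h.symm
  -- surjectivity onto balls
  have hsurjB : ∀ (x : X) (w : Y), dist w (f x) < s → ∃ z, dist z x < s ∧ f z = w := by
    intro x w hw
    have hmem : w ∈ f '' Metric.ball x s := by
      rw [(hloc x).2]; exact Metric.mem_ball.mpr hw
    obtain ⟨z, hz, rfl⟩ := hmem
    exact ⟨z, Metric.mem_ball.mp hz, rfl⟩
  have hA : ∀ x z : X, dist z x < s → dist (f z) (f x) = dist z x := by
    intro x z h
    exact hdist x z x h (by simpa using hs)
  -- continuity
  have hcont : Continuous f := by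
    rw [Metric.continuous_iff]
    intro b ε hε
    refine ⟨min ε s, lt_min hε hs, fun a ha => ?_⟩
    rw [hA b a (lt_of_lt_of_le ha (min_le_right _ _))]
    exact lt_of_lt_of_le ha (min_le_left _ _)
  -- surjectivity
  have hfsurj : Function.Surjective f := by
    have hclopen : IsClopen (Set.range f) := by
      constructor
      · rw [← isOpen_compl_iff]
        rw [Metric.isOpen_iff]
        intro y hy
        refine ⟨s, hs, fun w hw => ?_⟩
        intro hwr
        obtain ⟨x, rfl⟩ := hwr
        rw [Metric.mem_ball] at hw
        obtain ⟨z, _, hz⟩ := hsurjB x y (by rwa [dist_comm] at hw)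
        exact hy ⟨z, hz⟩
      · rw [Metric.isOpen_iff]
        rintro y ⟨x, rfl⟩
        refine ⟨s, hs, fun w hw => ?_⟩
        rw [Metric.mem_ball] at hw
        obtain ⟨z, _, hz⟩ := hsurjB x w hw
        exact ⟨z, hz⟩
    have := hclopen.eq_univ (Set.range_nonempty f)
    exact Set.range_eq_univ.mp this
  intro y
  obtain ⟨x0, hx0⟩ := hfsurj y
  -- fiber is discrete
  have hdisc : DiscreteTopology (f ⁻¹' {y} : Set X) := by
    rw [discreteTopology_iff_isOpen_singleton]
    intro a
    have hset : ({a} : Set (f ⁻¹' {y})) = Subtype.val ⁻¹' Metric.ball (a : X) s := by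
      ext z
      simp only [Set.mem_singleton_iff, Set.mem_preimage, Metric.mem_ball]
      constructor
      · rintro rfl; simpa using hs
      · intro h
        have hz : f (z : X) = y := z.2
        have ha : f (a : X) = y := a.2
        exact Subtype.ext (hinj a z a h (by simpa using hs) (hz.trans ha.symm))
    rw [hset]
    exact Metric.isOpen_ball.preimage continuous_subtype_val
  haveI := hdisc
  -- the section picking the fiber point near z
  have hφ' : ∀ z : X, ∃ x, f x = y ∧ (dist (f z) y < s / 2 → dist z x < s / 2) := by
    intro z
    by_cases hz : dist (f z) y < s / 2
    · obtain ⟨x, hx, hfx⟩ := hsurjB z y (by rw [dist_comm]; linarith)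
      refine ⟨x, hfx, fun _ => ?_⟩
      have h1 : dist (f x) (f z) = dist x z := hA z x hx
      rw [dist_comm z x, ← h1, hfx, dist_comm]
      exact hz
    · exact ⟨x0, hx0, fun h => absurd h hz⟩
  choose φ hφ1 hφ2 using hφ'
  have hφu : ∀ z x : X, f x = y → dist z x < s / 2 → φ z = x := by
    intro z x hx hzx
    have hz : dist (f z) y < s / 2 := by
      rw [← hx, hdist x z x (by linarith) (by simpa using hs)]
      exact hzx
    have h1 := hφ2 z hz
    have h2 : dist (φ z) x ≤ dist (φ z) z + dist z x := dist_triangle _ _ _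
    rw [dist_comm (φ z) z] at h2
    exact hinj x (φ z) x (by linarith) (by simpa using hs) ((hφ1 z).trans hx.symm)
  -- local inverses
  have hg' : ∀ (w : Y) (x : X), ∃ z, dist w (f x) < s → dist z x < s ∧ f z = w := by
    intro w x
    by_cases hw : dist w (f x) < s
    · obtain ⟨z, h1, h2⟩ := hsurjB x w hw
      exact ⟨z, fun _ => ⟨h1, h2⟩⟩
    · exact ⟨x0, fun h => absurd h hw⟩
  choose g hg using hg'
  refine IsEvenlyCovered.of_trivialization (t :=
    { toFun := fun z => (f z, ⟨φ z, hφ1 z⟩),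
       invFun := fun p => g p.1 (p.2 : X),
       source := f ⁻¹' Metric.ball y (s / 2),
       target := Metric.ball y (s / 2) ×ˢ Set.univ,
       map_source' := fun z hz => ⟨hz, trivial⟩,
       map_target' := ?mt,
       left_inv' := ?li,
       right_inv' := ?ri,
       open_source := Metric.isOpen_ball.preimage hcont,
       open_target := Metric.isOpen_ball.prod isOpen_univ,
       continuousOn_toFun := ?ct,
       continuousOn_invFun := ?ci,
       baseSet := Metric.ball y (s / 2),
       open_baseSet := Metric.isOpen_ball,
       source_eq := rfl,
       target_eq := rfl,
       proj_toFun := fun p _ => rfl }) (Metric.mem_ball_self (by linarith))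
  case mt =>
    rintro ⟨w, x⟩ ⟨hw, -⟩
    have hfx : f (x : X) = y := x.2
    rw [Metric.mem_ball] at hw
    have h := hg w (x : X) (by rw [hfx]; linarith)
    simpa [Set.mem_preimage, Metric.mem_ball, h.2] using hw
  case li =>
    intro z hz
    have hz' : dist (f z) y < s / 2 := Metric.mem_ball.mp hz
    have hφz : dist z (φ z) < s / 2 := hφ2 z hz'
    have h := hg (f z) (φ z) (by rw [hφ1 z]; linarith)
    exact hinj (φ z) (g (f z) (φ z)) z h.1 (by linarith) (h.2)
  case ri =>
    rintro ⟨w, x⟩ ⟨hw, -⟩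
    have hfx : f (x : X) = y := x.2
    rw [Metric.mem_ball] at hw
    have h := hg w (x : X) (by rw [hfx]; linarith)
    have hd : dist (g w (x : X)) (x : X) < s / 2 := by
      have := hA (x : X) (g w (x : X)) h.1
      rw [h.2, hfx] at this
      rw [← this]; exact hw
    have hφg : φ (g w (x : X)) = (x : X) := hφu _ _ hfx hd
    refine Prod.ext h.2 (Subtype.ext ?_)
    exact hφg
  case ct =>
    intro z hz
    apply ContinuousAt.continuousWithinAt
    refine ContinuousAt.prodMk (hcont.continuousAt) ?_
    have hz' : dist (f z) y < s / 2 := Metric.mem_ball.mp hz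
    have hε : (0 : ℝ) < s / 2 - dist z (φ z) := by linarith [hφ2 z hz']
    have hev : (fun z' => (⟨φ z', hφ1 z'⟩ : (f ⁻¹' {y} : Set X))) =ᶠ[nhds z]
        fun _ => (⟨φ z, hφ1 z⟩ : (f ⁻¹' {y} : Set X)) := by
      filter_upwards [Metric.ball_mem_nhds z hε] with z' hz'b
      rw [Metric.mem_ball] at hz'b
      have : dist z' (φ z) < s / 2 := by
        calc dist z' (φ z) ≤ dist z' z + dist z (φ z) := dist_triangle _ _ _
        _ < s / 2 := by linarith
      exact Subtype.ext (hφu z' (φ z) (hφ1 z) this)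
    exact continuousAt_const.congr hev.symm
  case ci =>
    rintro ⟨w, x⟩ ⟨hw, -⟩
    apply ContinuousAt.continuousWithinAt
    have hfx : f (x : X) = y := x.2
    rw [Metric.mem_ball] at hw
    -- eventually the fiber coordinate is constant
    have hsnd : ∀ᶠ p : Y × (f ⁻¹' {y} : Set X) in nhds (w, x), p.2 = x := by
      have h1 : {x} ∈ nhds x := (isOpen_discrete ({x} : Set (f ⁻¹' {y} : Set X))).mem_nhds rfl
      have h2 : ContinuousAt Prod.snd ((w, x) : Y × (f ⁻¹' {y} : Set X)) := continuousAt_snd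
      filter_upwards [h2.preimage_mem_nhds h1] with p hp
      simpa using hp
    have hev : (fun p : Y × (f ⁻¹' {y} : Set X) => g p.1 (p.2 : X)) =ᶠ[nhds (w, x)]
        fun p => g p.1 (x : X) := by
      filter_upwards [hsnd] with p hp
      rw [hp]
    refine ContinuousAt.congr ?_ hev.symm
    have hgc : ContinuousAt (fun w' => g w' (x : X)) w := by
      rw [Metric.continuousAt_iff]
      intro ε hε
      refine ⟨min ε (s - dist w y), lt_min hε (by linarith), fun w' hw' => ?_⟩
      have hw's : dist w' y < s := by
        calc dist w' y ≤ dist w' w + dist w y := dist_triangle _ _ _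
        _ < s := by
            have := lt_of_lt_of_le hw' (min_le_right _ _)
            linarith
      have h1 := hg w' (x : X) (by rw [hfx]; exact hw's)
      have h2 := hg w (x : X) (by rw [hfx]; linarith)
      have h3 : dist (f (g w' (x : X))) (f (g w (x : X))) = dist (g w' (x : X)) (g w (x : X)) :=
        hdist (x : X) _ _ h1.1 h2.1
      rw [h1.2, h2.2] at h3
      rw [← h3]
      exact lt_of_lt_of_le hw' (min_le_left _ _)
    exact hgc.comp_of_eq continuousAt_fst rfl
end

section
/- Let G be a topological group acting continuously by isometries on a metric space X, let H ≤ G be a closed cocompact subgroup (i.e. G = H K for some compact K ⊆ G). If the action of G on X is cobounded (there is a bounded set F ⊆ X with G·F = X) and locally bounded (every g ∈ G and x ∈ X has a neighborhood V of g with V·x bounded), then the action of H on X is cobounded. -/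
open Pointwise

/-- If a topological group `G` acts continuously by isometries on a metric space `X`,
the action is cobounded and locally bounded, and `H ≤ G` is a closed cocompact
subgroup (`G = H K` with `K` compact), then the action of `H` on `X` is cobounded. -/
theorem cocompact_subgroup_acts_coboundedly {G X : Type*} [Group G] [TopologicalSpace G]
    [IsTopologicalGroup G] [MetricSpace X] [MulAction G X]
    (hcont : Continuous fun p : G × X => p.1 • p.2)
    (hiso : ∀ g : G, Isometry fun x : X => g • x)
    (H : Subgroup G) (hHclosed : IsClosed (H : Set G))
    (K : Set G) (hK : IsCompact K) (hHK : (H : Set G) * K = Set.univ)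
    (hcobounded : ∃ F : Set X, Bornology.IsBounded F ∧ ∀ x : X, ∃ g : G, ∃ y ∈ F, x = g • y)
    (hlocbounded : ∀ (g : G) (x : X), ∃ V ∈ nhds g, Bornology.IsBounded ((fun h : G => h • x) '' V)) :
    ∃ F : Set X, Bornology.IsBounded F ∧ ∀ x : X, ∃ h ∈ H, ∃ y ∈ F, x = h • y := by
  obtain ⟨F, hFb, hF⟩ := hcobounded
  refine ⟨(fun p : G × X => p.1 • p.2) '' (K ×ˢ F), ?_, ?_⟩
  · rcases F.eq_empty_or_nonempty with rfl | ⟨y₀, hy₀⟩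
    · simp
    · -- the orbit map of y₀ on K has compact hence bounded image
      have hS : Bornology.IsBounded ((fun k : G => k • y₀) '' K) :=
        (hK.image (hcont.comp (Continuous.prodMk_left y₀))).isBounded
      obtain ⟨C, hC⟩ := Metric.isBounded_iff.1 hS
      obtain ⟨D, hD⟩ := Metric.isBounded_iff.1 hFb
      rw [Metric.isBounded_iff]
      refine ⟨D + C + D, ?_⟩
      rintro _ ⟨⟨k₁, y₁⟩, ⟨hk₁, hy₁⟩, rfl⟩ _ ⟨⟨k₂, y₂⟩, ⟨hk₂, hy₂⟩, rfl⟩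
      calc dist (k₁ • y₁) (k₂ • y₂)
          ≤ dist (k₁ • y₁) (k₁ • y₀) + dist (k₁ • y₀) (k₂ • y₀)
            + dist (k₂ • y₀) (k₂ • y₂) := dist_triangle4 _ _ _ _
        _ ≤ D + C + D := by
            rw [(hiso k₁).dist_eq, (hiso k₂).dist_eq]
            gcongr
            · exact hD hy₁ hy₀
            · exact hC ⟨k₁, hk₁, rfl⟩ ⟨k₂, hk₂, rfl⟩
            · exact hD hy₀ hy₂
  · intro x
    obtain ⟨g, y, hy, rfl⟩ := hF x
    have : g ∈ (H : Set G) * K := by rw [hHK]; trivial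
    obtain ⟨h, hh, k, hk, rfl⟩ := this
    exact ⟨h, hh, k • y, ⟨(k, y), ⟨hk, hy⟩, rfl⟩, by rw [mul_smul]⟩
end

section
/- Let G be a topological group, Γ ≤ G a finitely generated discrete subgroup, and Δ ◁ Γ a finite-index normal subgroup whose centralizer in G is trivial. If every homomorphism r : Δ → G sufficiently close to the inclusion (in the topology of pointwise convergence) equals conjugation by some element of G, then the same holds for Γ: every homomorphism r : Γ → G sufficiently close to the inclusion is conjugation by some element of G. -/
/-- Local rigidity passes from a finite-index normal subgroup `Δ ◁ Γ` with trivial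
centralizer in `G` to the finitely generated discrete subgroup `Γ` itself:
if every homomorphism `Δ → G` close enough (pointwise) to the inclusion is a
conjugation, then the same holds for homomorphisms `Γ → G`. -/
theorem local_rigidity_of_finite_index_normal {G : Type*} [Group G] [TopologicalSpace G]
    [IsTopologicalGroup G] (Γ Δ : Subgroup G) [DiscreteTopology Γ] (hFG : Group.FG Γ)
    (hΔΓ : Δ ≤ Γ) (hnorm : ∀ γ ∈ Γ, ∀ δ ∈ Δ, γ * δ * γ⁻¹ ∈ Δ)
    (hfi : (Δ.subgroupOf Γ).index ≠ 0)
    (hcent : Subgroup.centralizer (Δ : Set G) = ⊥)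
    (hΔrigid : ∃ 𝒰 ∈ nhds (fun δ : Δ => (δ : G)),
      ∀ r : Δ →* G, ⇑r ∈ 𝒰 → ∃ g : G, ∀ δ : Δ, r δ = g⁻¹ * (δ : G) * g) :
    ∃ 𝒱 ∈ nhds (fun γ : Γ => (γ : G)),
      ∀ r : Γ →* G, ⇑r ∈ 𝒱 → ∃ g : G, ∀ γ : Γ, r γ = g⁻¹ * (γ : G) * g := by
  obtain ⟨𝒰, h𝒰, hrig⟩ := hΔrigid
  refine ⟨(fun f : Γ → G => fun δ : Δ => f (Subgroup.inclusion hΔΓ δ)) ⁻¹' 𝒰, ?_, ?_⟩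
  · apply ContinuousAt.preimage_mem_nhds
    · exact (continuous_pi fun δ => continuous_apply _).continuousAt
    · convert h𝒰 using 2
      rfl
  · intro r hr
    obtain ⟨g, hg⟩ := hrig (r.comp (Subgroup.inclusion hΔΓ)) hr
    refine ⟨g, fun γ => ?_⟩
    -- the element z := γ⁻¹ * g * (r γ) * g⁻¹ centralizes Δ
    have hz : (γ : G)⁻¹ * (g * r γ * g⁻¹) ∈ Subgroup.centralizer (Δ : Set G) := by
      rw [Subgroup.mem_centralizer_iff]
      intro δ hδ
      set δS : Δ := ⟨δ, hδ⟩ with hδS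
      have hδcoe : ((Subgroup.inclusion hΔΓ δS : Γ) : G) = δ := rfl
      have h1 : r (Subgroup.inclusion hΔΓ δS) = g⁻¹ * δ * g := hg δS
      have hmem : (γ : G) * δ * (γ : G)⁻¹ ∈ Δ := hnorm γ γ.2 δ hδ
      set eS : Δ := ⟨(γ : G) * δ * (γ : G)⁻¹, hmem⟩ with heS
      have hincl : Subgroup.inclusion hΔΓ eS = γ * Subgroup.inclusion hΔΓ δS * γ⁻¹ := by
        ext; rfl
      have h2 : r (Subgroup.inclusion hΔΓ eS)
          = g⁻¹ * ((γ : G) * δ * (γ : G)⁻¹) * g := hg eS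
      rw [hincl] at h2
      have heq : r γ * (g⁻¹ * δ * g) * (r γ)⁻¹ = g⁻¹ * ((γ : G) * δ * (γ : G)⁻¹) * g := by
        rw [← h1, ← h2, map_mul, map_mul, map_inv]
      have h3 : g * (r γ * (g⁻¹ * δ * g) * (r γ)⁻¹) * g⁻¹ = (γ : G) * δ * (γ : G)⁻¹ := by
        rw [heq]; group
      calc δ * ((γ : G)⁻¹ * (g * r γ * g⁻¹))
          = (γ : G)⁻¹ * ((γ : G) * δ * (γ : G)⁻¹) * (g * r γ * g⁻¹) := by group
        _ = (γ : G)⁻¹ * (g * (r γ * (g⁻¹ * δ * g) * (r γ)⁻¹) * g⁻¹) * (g * r γ * g⁻¹) := by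
            rw [h3]
        _ = ((γ : G)⁻¹ * (g * r γ * g⁻¹)) * δ := by group
    rw [hcent, Subgroup.mem_bot] at hz
    calc r γ = g⁻¹ * ((γ : G) * ((γ : G)⁻¹ * (g * r γ * g⁻¹))) * g := by group
      _ = g⁻¹ * ((γ : G) * 1) * g := by rw [hz]
      _ = g⁻¹ * (γ : G) * g := by group
end

section
/- Let G be a locally compact group, Γ a uniform lattice in G (discrete with G = ΓK for some compact K), and p : G̃ → G a continuous open surjective homomorphism of locally compact groups with discrete kernel N. Then Γ̃ = p⁻¹(Γ) is a uniform lattice in G̃. -/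
open Pointwise

-- auxiliary: discrete subgroup gives open set isolating 1
lemma exists_isolating_open {G : Type*} [Group G] [TopologicalSpace G]
    (S : Subgroup G) [DiscreteTopology S] :
    ∃ V : Set G, IsOpen V ∧ (1 : G) ∈ V ∧ ∀ x ∈ V, x ∈ S → x = 1 := by
  have h : IsOpen ({1} : Set S) := isOpen_discrete _
  rw [isOpen_induced_iff] at h
  obtain ⟨V, hVo, hV⟩ := h
  refine ⟨V, hVo, ?_, ?_⟩
  · have : ((1 : S) : G) ∈ V := by
      have : (1 : S) ∈ (Subtype.val ⁻¹' V : Set S) := by rw [hV]; rfl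
      exact this
    simpa using this
  · intro x hxV hxS
    have : (⟨x, hxS⟩ : S) ∈ (Subtype.val ⁻¹' V : Set S) := hxV
    rw [hV] at this
    exact congrArg Subtype.val this

/-- If `Γ` is a uniform lattice in the locally compact group `G` and `p : G̃ → G` is a
continuous open surjective homomorphism of locally compact groups with discrete kernel,
then `p⁻¹(Γ)` is a uniform lattice in `G̃`. -/
theorem preimage_uniform_lattice {Gt G : Type*} [Group Gt] [TopologicalSpace Gt]
    [IsTopologicalGroup Gt] [LocallyCompactSpace Gt] [Group G] [TopologicalSpace G]
    [IsTopologicalGroup G] [LocallyCompactSpace G]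
    (p : Gt →* G) (hpc : Continuous p) (hpo : IsOpenMap p) (hps : Function.Surjective p)
    [DiscreteTopology p.ker]
    (Γ : Subgroup G) [DiscreteTopology Γ]
    (K : Set G) (hK : IsCompact K) (hΓK : (Γ : Set G) * K = Set.univ) :
    DiscreteTopology (Γ.comap p) ∧
      ∃ Kt : Set Gt, IsCompact Kt ∧ ((Γ.comap p : Subgroup Gt) : Set Gt) * Kt = Set.univ := by
  constructor
  · -- discreteness
    obtain ⟨V, hVo, hV1, hViso⟩ := exists_isolating_open Γ
    obtain ⟨W, hWo, hW1, hWiso⟩ := exists_isolating_open p.ker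
    apply discreteTopology_iff_isOpen_singleton_one.mpr
    rw [isOpen_induced_iff]
    refine ⟨W ∩ p ⁻¹' V, (hWo.inter (hVo.preimage hpc)), ?_⟩
    ext x
    simp only [Set.mem_preimage, Set.mem_inter_iff, Set.mem_singleton_iff]
    constructor
    · rintro ⟨hxW, hxV⟩
      have hx : p (x : Gt) = 1 := hViso _ hxV x.2
      have : (x : Gt) = 1 := hWiso _ hxW hx
      exact Subtype.ext this
    · rintro rfl
      exact ⟨hW1, by simpa using hV1⟩
  · -- cocompactness
    obtain ⟨C, hCc, hC1⟩ := exists_compact_mem_nhds (1 : Gt)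
    have h1C : (1 : Gt) ∈ interior C := mem_interior_iff_mem_nhds.mpr hC1
    have hcover : K ⊆ ⋃ x : Gt, p '' (x • interior C) := by
      intro g hg
      obtain ⟨y, hy⟩ := hps g
      exact Set.mem_iUnion.mpr ⟨y, ⟨y * 1, ⟨1, h1C, rfl⟩, by simp [hy]⟩⟩
    obtain ⟨t, ht⟩ := hK.elim_finite_subcover (fun x : Gt => p '' (x • interior C))
      (fun x => hpo _ ((isOpen_interior).smul x)) hcover
    refine ⟨⋃ x ∈ t, x • C, ?_, ?_⟩
    · exact t.isCompact_biUnion (fun x _ => hCc.smul x)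
    · apply Set.eq_univ_of_forall
      intro g
      have hpg : p g ∈ (Γ : Set G) * K := hΓK ▸ Set.mem_univ _
      obtain ⟨γ, hγ, k, hk, hgk⟩ := hpg
      have hk2 := ht hk
      rw [Set.mem_iUnion₂] at hk2
      obtain ⟨x, hxt, z, hz, hzk⟩ := hk2
      obtain ⟨c, hc, rfl⟩ := hz
      have hzKt : x * c ∈ ⋃ x ∈ t, x • C :=
        Set.mem_biUnion hxt ⟨c, interior_subset hc, rfl⟩
      refine ⟨g * (x * c)⁻¹, ?_, x * c, hzKt, by group⟩
      have hzk' : p (x * c) = k := hzk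
      have : p (g * (x * c)⁻¹) = γ := by
        rw [map_mul, map_inv, hzk', ← hgk]
        group
      simp only [SetLike.mem_coe, Subgroup.mem_comap, this]
      exact hγ
end

section
/- Let G be a locally compact group, Γ ≤ G a discrete subgroup, and U a symmetric relatively compact open identity neighborhood with Γ ∩ U = {e}. Let W be an open symmetric identity neighborhood with W·W ⊆ U. Then any closed subgroup H ≤ G satisfying H ∩ (cl(U) \ W) = ∅ has the property that H ∩ U is a subgroup of G. -/
open Pointwise

/-- Let `U` be a symmetric relatively compact open identity neighborhood meeting the
discrete subgroup `Γ` only at the identity, and `W` an open symmetric identity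
neighborhood with `W·W ⊆ U`. Then any closed subgroup `H` avoiding `cl(U) \ W`
has the property that `H ∩ U` is a subgroup. -/
theorem inter_bubble_is_subgroup {G : Type*} [Group G] [TopologicalSpace G]
    [IsTopologicalGroup G] [LocallyCompactSpace G]
    (Γ : Subgroup G) [DiscreteTopology Γ]
    (U : Set G) (hUo : IsOpen U) (hUsymm : U⁻¹ = U) (hU1 : (1 : G) ∈ U)
    (hUrc : IsCompact (closure U)) (hΓU : (Γ : Set G) ∩ U = {1})
    (W : Set G) (hWo : IsOpen W) (hWsymm : W⁻¹ = W) (hW1 : (1 : G) ∈ W)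
    (hWU : W * W ⊆ U)
    (H : Subgroup G) (hHclosed : IsClosed (H : Set G))
    (hHavoid : (H : Set G) ∩ (closure U \ W) = ∅) :
    ∃ S : Subgroup G, (S : Set G) = (H : Set G) ∩ U := by
  have key : (H : Set G) ∩ U ⊆ W := by
    intro x ⟨hxH, hxU⟩
    by_contra hxW
    have : x ∈ (H : Set G) ∩ (closure U \ W) :=
      ⟨hxH, subset_closure hxU, hxW⟩
    rw [hHavoid] at this
    exact this
  refine ⟨{ carrier := (H : Set G) ∩ U
            one_mem' := ⟨H.one_mem, hU1⟩
            inv_mem' := fun {x} hx =>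
              ⟨H.inv_mem hx.1, hUsymm ▸ Set.inv_mem_inv.mpr hx.2⟩
            mul_mem' := fun {a b} ha hb =>
              ⟨H.mul_mem ha.1 hb.1, hWU (Set.mul_mem_mul (key ha) (key hb))⟩ }, rfl⟩
end
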